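/- Let T ≥ 2 and θ = 1 + (T−1)ρ > 0, μ > 0, σ > 0. For γ ≥ (μ + σ²θ/(Tμ))^T, the supremum over all probability distributions P on ℝ₊^T with E[ξ̃] = μ𝟙 and E[ξ̃ξ̃ᵀ] ⪯ Σ + μ²𝟙𝟙ᵀ of P(∏ₜ ξ̃ₜ ≥ γ) equals σ²θ/(σ²θ + T(μ − γ^{1/T})²); for μ^T < γ < (μ + σ²θ/(Tμ))^T it equals μγ^{−1/T}; and for 0 < γ ≤ μ^T it equals 1. -/

import Mathlib

open MeasureTheory ENNReal

lemma psd_helper {T : ℕ} (a c : ℝ) (ha : 0 ≤ a) (hac : 0 ≤ a + (T : ℝ) * c) :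
    Matrix.PosSemidef (Matrix.of fun s t : Fin T =>
      (if s = t then a else 0) + c) := by
  rw [Matrix.posSemidef_iff_dotProduct_mulVec]
  constructor
  · ext s t
    simp [Matrix.conjTranspose, eq_comm]
  · intro x
    have inner : ∀ s, ∑ t, ((if s = t then a else 0) + c) * x t
        = a * x s + c * ∑ t, x t := by
      intro s
      rw [Finset.sum_congr rfl (fun t _ => add_mul _ _ _), Finset.sum_add_distrib,
        ← Finset.mul_sum]
      congr 1
      simp [ite_mul, Finset.sum_ite_eq]
    have key : dotProduct (star x) ((Matrix.of fun s t : Fin T =>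
        (if s = t then a else 0) + c).mulVec x)
        = a * ∑ t, x t ^ 2 + c * (∑ t, x t) ^ 2 := by
      simp only [dotProduct, Matrix.mulVec, dotProduct, Matrix.of_apply,
        star_trivial, inner]
      calc ∑ s, x s * (a * x s + c * ∑ t, x t)
          = ∑ s, (a * x s ^ 2 + (c * ∑ t, x t) * x s) := by
            refine Finset.sum_congr rfl fun s _ => by ring
        _ = a * ∑ s, x s ^ 2 + c * (∑ t, x t) ^ 2 := by
            rw [Finset.sum_add_distrib, ← Finset.mul_sum, ← Finset.mul_sum]; ring
    rw [key]
    rcases le_or_gt 0 c with hc | hc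
    · positivity
    · have h1 : (∑ t, x t) ^ 2 ≤ (T : ℝ) * ∑ t, x t ^ 2 := by
        simpa using sq_sum_le_card_mul_sum_sq (s := (Finset.univ : Finset (Fin T))) (f := x)
      nlinarith [Finset.sum_nonneg (fun t (_ : t ∈ Finset.univ) => sq_nonneg (x t))]

section tp
variable {T : ℕ} (p : ℝ) (a b : Fin T → ℝ)

noncomputable def tpMeasure : Measure (Fin T → ℝ) :=
  ENNReal.ofReal p • Measure.dirac a + ENNReal.ofReal (1 - p) • Measure.dirac b

lemma tp_prob (hp0 : 0 ≤ p) (hp1 : p ≤ 1) : IsProbabilityMeasure (tpMeasure p a b) := by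
  constructor
  simp [tpMeasure, ← ENNReal.ofReal_add hp0 (by linarith : (0:ℝ) ≤ 1 - p)]

lemma tp_integrable (f : (Fin T → ℝ) → ℝ) (hf : Measurable f) :
    Integrable f (tpMeasure p a b) := by
  have hd : ∀ c : Fin T → ℝ, Integrable f (Measure.dirac c) := fun c =>
    ⟨hf.aestronglyMeasurable, by rw [hasFiniteIntegral_def, lintegral_dirac]; exact ENNReal.coe_lt_top⟩
  exact Integrable.add_measure ((hd a).smul_measure ofReal_ne_top)
    ((hd b).smul_measure ofReal_ne_top)

lemma tp_integral (hp0 : 0 ≤ p) (hp1 : p ≤ 1) (f : (Fin T → ℝ) → ℝ) (hf : Measurable f) :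
    ∫ ξ, f ξ ∂(tpMeasure p a b) = p * f a + (1 - p) * f b := by
  have hd : ∀ c : Fin T → ℝ, Integrable f (Measure.dirac c) := fun c =>
    ⟨hf.aestronglyMeasurable, by rw [hasFiniteIntegral_def, lintegral_dirac]; exact ENNReal.coe_lt_top⟩
  rw [tpMeasure, integral_add_measure ((hd a).smul_measure ofReal_ne_top)
    ((hd b).smul_measure ofReal_ne_top), integral_smul_measure, integral_smul_measure,
    integral_dirac, integral_dirac, ENNReal.toReal_ofReal hp0,
    ENNReal.toReal_ofReal (by linarith : (0:ℝ) ≤ 1 - p)]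
  simp

lemma tp_apply_mem_not {s : Set (Fin T → ℝ)} (hs : MeasurableSet s)
    (ha : a ∈ s) (hb : b ∉ s) : tpMeasure p a b s = ENNReal.ofReal p := by
  rw [tpMeasure, Measure.add_apply, Measure.smul_apply, Measure.smul_apply,
    Measure.dirac_apply' _ hs, Measure.dirac_apply' _ hs,
    Set.indicator_of_mem ha, Set.indicator_of_notMem hb]
  simp

lemma tp_ae {Q : (Fin T → ℝ) → Prop} (hQ : MeasurableSet {ξ | Q ξ}) (hqa : Q a) (hqb : Q b) :
    ∀ᵐ ξ ∂(tpMeasure p a b), Q ξ := by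
  rw [ae_iff]
  have h : {ξ | ¬ Q ξ} = {ξ | Q ξ}ᶜ := rfl
  rw [h, tpMeasure, Measure.add_apply, Measure.smul_apply, Measure.smul_apply,
    Measure.dirac_apply' _ hQ.compl, Measure.dirac_apply' _ hQ.compl,
    Set.indicator_of_notMem (by simpa using hqa), Set.indicator_of_notMem (by simpa using hqb)]
  simp
end tp

lemma markov_bound {Ω} [MeasurableSpace Ω] (P : Measure Ω) [IsProbabilityMeasure P]
    (f : Ω → ℝ) (hf0 : 0 ≤ᵐ[P] f) (hfi : Integrable f P) {ε : ℝ} (hε : 0 < ε) :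
    P {x | ε ≤ f x} ≤ ENNReal.ofReal ((∫ x, f x ∂P) / ε) := by
  have h := mul_meas_ge_le_integral_of_nonneg hf0 hfi ε
  have hne : P {x | ε ≤ f x} ≠ ⊤ := measure_ne_top _ _
  rw [← ENNReal.ofReal_toReal hne]
  apply ENNReal.ofReal_le_ofReal
  rw [le_div_iff₀ hε]
  simp only [measureReal_def] at h
  linarith

lemma cantelli_bound {Ω} [MeasurableSpace Ω] (P : Measure Ω) [IsProbabilityMeasure P]
    (f : Ω → ℝ) (hfi : Integrable f P) (hf2 : Integrable (fun x => f x ^ 2) P)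
    (m v a : ℝ) (hm : ∫ x, f x ∂P = m) (hv : ∫ x, f x ^ 2 ∂P ≤ m ^ 2 + v)
    (hv0 : 0 < v) (ha : 0 < a) :
    P {x | m + a ≤ f x} ≤ ENNReal.ofReal (v / (v + a ^ 2)) := by
  set lam := v / a with hlam
  have hlam0 : 0 < lam := div_pos hv0 ha
  set g := fun x => (f x - m + lam) ^ 2 with hg
  have hgeq : g = fun x => f x ^ 2 + (2 * (lam - m)) * f x + (lam - m) ^ 2 := by
    funext x; simp only [hg]; ring
  have hgi : Integrable g P := by
    rw [hgeq]
    exact (hf2.add (hfi.const_mul _)).add (integrable_const _)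
  have hi1 : Integrable (fun x => f x ^ 2 + 2 * (lam - m) * f x) P := hf2.add (hfi.const_mul _)
  have hgint : ∫ x, g x ∂P ≤ v + lam ^ 2 := by
    rw [hgeq]
    have e1 : ∫ x, f x ^ 2 + 2 * (lam - m) * f x + (lam - m) ^ 2 ∂P
        = (∫ x, f x ^ 2 + 2 * (lam - m) * f x ∂P) + (lam - m) ^ 2 := by
      rw [integral_add hi1 (integrable_const _), integral_const]
      simp [measure_univ]
    have e2 : ∫ x, f x ^ 2 + 2 * (lam - m) * f x ∂P
        = (∫ x, f x ^ 2 ∂P) + 2 * (lam - m) * m := by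
      rw [integral_add hf2 (hfi.const_mul _), MeasureTheory.integral_const_mul, hm]
    rw [e1, e2]
    nlinarith
  have hsub : {x | m + a ≤ f x} ⊆ {x | (a + lam) ^ 2 ≤ g x} := by
    intro x hx
    simp only [Set.mem_setOf_eq] at hx ⊢
    have h1 : a + lam ≤ f x - m + lam := by linarith
    have h2 : 0 ≤ a + lam := by linarith
    exact pow_le_pow_left₀ h2 h1 2
  have hmb := markov_bound P g (ae_of_all _ fun x => sq_nonneg _) hgi
    (by positivity : (0:ℝ) < (a + lam) ^ 2)
  refine le_trans (measure_mono hsub) (le_trans hmb (ENNReal.ofReal_le_ofReal ?_))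
  have key : (v + lam ^ 2) / (a + lam) ^ 2 = v / (v + a ^ 2) := by
    rw [hlam]
    field_simp
    ring
  rw [← key]
  gcongr

lemma event_meas {T : ℕ} (γ : ℝ) : MeasurableSet {ξ : Fin T → ℝ | γ ≤ ∏ t, ξ t} :=
  measurableSet_le measurable_const (Finset.measurable_prod _ fun t _ => measurable_pi_apply t)

lemma const_mem_event {T : ℕ} (γ x : ℝ) :
    (fun _ : Fin T => x) ∈ {ξ : Fin T → ℝ | γ ≤ ∏ t, ξ t} ↔ γ ≤ x ^ T := by
  simp [Set.mem_setOf_eq, Finset.prod_const, Finset.card_univ]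

lemma feas_mem (T : ℕ) (hT : 2 ≤ T) (μ σ ρ θ γ : ℝ) (hρ2 : ρ < 1) (hθ : θ = 1 + ((T:ℝ)-1)*ρ)
    (x y p : ℝ) (hx : 0 ≤ x) (hy : 0 ≤ y) (hp0 : 0 ≤ p) (hp1 : p ≤ 1)
    (hmean : p * x + (1 - p) * y = μ)
    (hq : p * x ^ 2 + (1 - p) * y ^ 2 ≤ μ ^ 2 + σ ^ 2 * θ / (T : ℝ))
    (hσ : 0 < σ)
    (hxE : γ ≤ x ^ T) (hyE : ¬ γ ≤ y ^ T) :
    ENNReal.ofReal p ∈ {r : ℝ≥0∞ | ∃ P : Measure (Fin T → ℝ), IsProbabilityMeasure P ∧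
        (∀ᵐ ξ ∂P, ∀ t, 0 ≤ ξ t) ∧
        (∀ t, Integrable (fun ξ => ξ t) P) ∧
        (∀ s t, Integrable (fun ξ => ξ s * ξ t) P) ∧
        (∀ t, ∫ ξ, ξ t ∂P = μ) ∧
        Matrix.PosSemidef (Matrix.of fun s t : Fin T =>
          ((if s = t then (1 - ρ) * σ^2 else 0) + ρ * σ^2 + μ^2) - ∫ ξ, ξ s * ξ t ∂P) ∧
        r = P {ξ | γ ≤ ∏ t, ξ t}} := by
  have hT0 : (0:ℝ) < T := by exact_mod_cast Nat.lt_of_lt_of_le Nat.zero_lt_two hT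
  refine ⟨tpMeasure p (fun _ => x) (fun _ => y), tp_prob p _ _ hp0 hp1, ?_, ?_, ?_, ?_, ?_, ?_⟩
  · have hms : MeasurableSet {ξ : Fin T → ℝ | ∀ t, 0 ≤ ξ t} := by
      have : {ξ : Fin T → ℝ | ∀ t, 0 ≤ ξ t} = ⋂ t, {ξ : Fin T → ℝ | 0 ≤ ξ t} := by
        ext ξ; simp
      rw [this]
      exact MeasurableSet.iInter fun t =>
        measurableSet_le measurable_const (measurable_pi_apply t)
    exact tp_ae p _ _ hms (fun _ => hx) (fun _ => hy)
  · exact fun t => tp_integrable p _ _ _ (measurable_pi_apply t)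
  · exact fun s t => tp_integrable p _ _ _ ((measurable_pi_apply s).mul (measurable_pi_apply t))
  · intro t
    rw [tp_integral p _ _ hp0 hp1 _ (measurable_pi_apply t)]
    exact hmean
  · have hint : ∀ s t : Fin T, (∫ ξ, ξ s * ξ t ∂(tpMeasure p (fun _ => x) (fun _ => y)))
        = p * x ^ 2 + (1 - p) * y ^ 2 := by
      intro s t
      rw [tp_integral p _ _ hp0 hp1 (fun ξ => ξ s * ξ t) ((measurable_pi_apply s).mul (measurable_pi_apply t))]
      ring
    have heq : (Matrix.of fun s t : Fin T =>
          ((if s = t then (1 - ρ) * σ^2 else 0) + ρ * σ^2 + μ^2)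
            - ∫ ξ, ξ s * ξ t ∂(tpMeasure p (fun _ => x) (fun _ => y)))
        = Matrix.of fun s t : Fin T => (if s = t then (1 - ρ) * σ^2 else 0)
            + (ρ * σ^2 + μ^2 - (p * x ^ 2 + (1 - p) * y ^ 2)) := by
      ext s t
      simp only [Matrix.of_apply, hint]
      ring
    rw [heq]
    apply psd_helper
    · nlinarith [sq_nonneg σ]
    · have : (1 - ρ) * σ^2 + (T:ℝ) * (ρ * σ^2) = σ^2 * θ := by rw [hθ]; ring
      have h2 : (T:ℝ) * (p * x ^ 2 + (1 - p) * y ^ 2) ≤ (T:ℝ) * (μ ^ 2 + σ ^ 2 * θ / (T:ℝ)) :=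
        mul_le_mul_of_nonneg_left hq hT0.le
      have h3 : (T:ℝ) * (μ ^ 2 + σ ^ 2 * θ / (T:ℝ)) = (T:ℝ) * μ^2 + σ^2*θ := by
        field_simp
      nlinarith
  · rw [tp_apply_mem_not p _ _ (event_meas γ) ((const_mem_event γ x).2 hxE)
      (fun h => hyE ((const_mem_event γ y).1 h))]

lemma feas_upper (T : ℕ) (hT : 2 ≤ T) (μ σ ρ θ γ α : ℝ) (hμ : 0 < μ) (hσ : 0 < σ)
    (hθ : θ = 1 + ((T:ℝ)-1)*ρ) (hθ0 : 0 < θ) (hγ : 0 < γ)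
    (hα : 0 < α) (hαT : α ^ T = γ)
    (P : Measure (Fin T → ℝ)) (hP : IsProbabilityMeasure P)
    (h0 : ∀ᵐ ξ ∂P, ∀ t, 0 ≤ ξ t)
    (hi1 : ∀ t, Integrable (fun ξ => ξ t) P)
    (hi2 : ∀ s t, Integrable (fun ξ => ξ s * ξ t) P)
    (hmean : ∀ t, ∫ ξ, ξ t ∂P = μ)
    (hpsd : Matrix.PosSemidef (Matrix.of fun s t : Fin T =>
          ((if s = t then (1 - ρ) * σ^2 else 0) + ρ * σ^2 + μ^2) - ∫ ξ, ξ s * ξ t ∂P)) :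
    P {ξ | γ ≤ ∏ t, ξ t} ≤ ENNReal.ofReal (μ / α) ∧
    (μ < α → P {ξ | γ ≤ ∏ t, ξ t} ≤
      ENNReal.ofReal (σ^2*θ / (σ^2*θ + (T:ℝ) * (α - μ)^2))) := by
  haveI := hP
  have hT0 : (0:ℝ) < T := by exact_mod_cast Nat.lt_of_lt_of_le Nat.zero_lt_two hT
  set S : (Fin T → ℝ) → ℝ := fun ξ => ∑ t, ξ t with hS
  have hSi : Integrable S P := integrable_finset_sum _ fun t _ => hi1 t
  have hSint : ∫ ξ, S ξ ∂P = (T:ℝ) * μ := by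
    rw [hS, integral_finset_sum _ fun t _ => hi1 t]
    simp [hmean, Finset.card_univ]
  have hS2eq : (fun ξ => S ξ ^ 2) = fun ξ => ∑ s, ∑ t, ξ s * ξ t := by
    funext ξ
    rw [hS, sq, Finset.sum_mul_sum]
  have hS2i : Integrable (fun ξ => S ξ ^ 2) P := by
    rw [hS2eq]
    exact integrable_finset_sum _ fun s _ => integrable_finset_sum _ fun t _ => hi2 s t
  have hS2int : ∫ ξ, S ξ ^ 2 ∂P = ∑ s, ∑ t, ∫ ξ, ξ s * ξ t ∂P := by
    rw [hS2eq, integral_finset_sum _ fun s _ => integrable_finset_sum _ fun t _ => hi2 s t]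
    exact Finset.sum_congr rfl fun s _ => integral_finset_sum _ fun t _ => hi2 s t
  -- second moment bound from PSD at the all-ones vector
  have hones := hpsd.dotProduct_mulVec_nonneg (fun _ => (1:ℝ))
  have hdot : dotProduct (star fun _ : Fin T => (1:ℝ))
      ((Matrix.of fun s t : Fin T =>
          ((if s = t then (1 - ρ) * σ^2 else 0) + ρ * σ^2 + μ^2) - ∫ ξ, ξ s * ξ t ∂P).mulVec
        fun _ => (1:ℝ))
      = (T:ℝ) * ((1-ρ)*σ^2) + (T:ℝ)^2 * (ρ*σ^2 + μ^2) - ∑ s, ∑ t, ∫ ξ, ξ s * ξ t ∂P := by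
    simp only [dotProduct, Matrix.mulVec, dotProduct, Matrix.of_apply,
      star_trivial, mul_one, one_mul]
    simp only [Finset.sum_sub_distrib, Finset.sum_add_distrib, Finset.sum_ite_eq,
      Finset.mem_univ, if_true, Finset.sum_const, Finset.card_univ, Fintype.card_fin,
      nsmul_eq_mul]
    ring
  have hmom : ∫ ξ, S ξ ^ 2 ∂P ≤ ((T:ℝ) * μ) ^ 2 + (T:ℝ) * (σ^2 * θ) := by
    rw [hS2int]
    rw [hdot] at hones
    have hexp : (T:ℝ) * ((1-ρ)*σ^2) + (T:ℝ)^2 * (ρ*σ^2) = (T:ℝ) * (σ^2 * θ) := by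
      rw [hθ]; ring
    nlinarith
  have hS0 : 0 ≤ᵐ[P] S := h0.mono fun ξ hξ => Finset.sum_nonneg fun t _ => hξ t
  have hEsub : P {ξ | γ ≤ ∏ t, ξ t} ≤ P {ξ | (T:ℝ) * α ≤ S ξ} := by
    refine measure_mono_ae (h0.mono fun ξ hξ hmem => ?_)
    change γ ≤ ∏ t, ξ t at hmem; change (T:ℝ) * α ≤ S ξ
    have hw : ∑ t : Fin T, (1 / (T:ℝ)) = 1 := by
      simp [Finset.card_univ]
      field_simp
    have hamgm := Real.geom_mean_le_arith_mean_weighted Finset.univ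
      (fun _ => 1 / (T:ℝ)) ξ (fun t _ => by positivity) hw (fun t _ => hξ t)
    have hprod : ∏ t, ξ t ^ (1 / (T:ℝ)) = (∏ t, ξ t) ^ (1 / (T:ℝ)) :=
      Real.finset_prod_rpow Finset.univ ξ (fun t _ => hξ t) _
    have halpha : α ≤ (∏ t, ξ t) ^ (1 / (T:ℝ)) := by
      have h1 : α = (α ^ T) ^ (1 / (T:ℝ)) := by
        rw [← Real.rpow_natCast α T, ← Real.rpow_mul hα.le]
        rw [mul_one_div, div_self (by positivity : (T:ℝ) ≠ 0), Real.rpow_one]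
      rw [h1, hαT]
      exact Real.rpow_le_rpow hγ.le hmem (by positivity)
    have hsum : ∑ t : Fin T, (1 / (T:ℝ)) * ξ t = (1 / (T:ℝ)) * S ξ := by
      rw [hS, Finset.mul_sum]
    rw [hprod, hsum] at hamgm
    have := le_trans halpha hamgm
    calc (T:ℝ) * α ≤ (T:ℝ) * ((1 / (T:ℝ)) * S ξ) :=
          mul_le_mul_of_nonneg_left this hT0.le
      _ = S ξ := by field_simp
  constructor
  · -- Markov
    have hmar := markov_bound P S hS0 hSi (by positivity : (0:ℝ) < (T:ℝ) * α)
    refine le_trans hEsub (le_trans hmar (le_of_eq ?_))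
    rw [hSint]
    congr 1
    rw [mul_div_mul_left _ _ (ne_of_gt hT0)]
  · -- Cantelli
    intro hμα
    have ha : (0:ℝ) < (T:ℝ) * (α - μ) := by
      have : 0 < α - μ := by linarith
      positivity
    have hv : (0:ℝ) < (T:ℝ) * (σ^2 * θ) := by positivity
    have hcan := cantelli_bound P S hSi hS2i ((T:ℝ) * μ) ((T:ℝ) * (σ^2*θ))
      ((T:ℝ) * (α - μ)) hSint hmom hv ha
    have hset : {ξ | (T:ℝ)*μ + (T:ℝ)*(α-μ) ≤ S ξ} = {ξ | (T:ℝ) * α ≤ S ξ} := by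
      ext ξ
      simp only [Set.mem_setOf_eq]
      constructor <;> intro h <;> linarith
    rw [hset] at hcan
    refine le_trans hEsub (le_trans hcan (le_of_eq ?_))
    congr 1
    rw [mul_pow]
    have hd : (T:ℝ) * (σ^2*θ) + (T:ℝ)^2 * (α-μ)^2 = (T:ℝ) * (σ^2*θ + (T:ℝ)*(α-μ)^2) := by ring
    rw [hd, mul_div_mul_left _ _ (ne_of_gt hT0)]

theorem stmt_16 (T : ℕ) (hT : 2 ≤ T) (μ σ ρ : ℝ) (hμ : 0 < μ) (hσ : 0 < σ)
    (hρ1 : -(1 / ((T : ℝ) - 1)) < ρ) (hρ2 : ρ < 1)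
    (hslater : 0 < μ^2 + ρ * σ^2)
    (θ : ℝ) (hθ : θ = 1 + ((T : ℝ) - 1) * ρ) (γ : ℝ) (hγ : 0 < γ) :
    sSup {r : ℝ≥0∞ | ∃ P : Measure (Fin T → ℝ), IsProbabilityMeasure P ∧
        (∀ᵐ ξ ∂P, ∀ t, 0 ≤ ξ t) ∧
        (∀ t, Integrable (fun ξ => ξ t) P) ∧
        (∀ s t, Integrable (fun ξ => ξ s * ξ t) P) ∧
        (∀ t, ∫ ξ, ξ t ∂P = μ) ∧
        Matrix.PosSemidef (Matrix.of fun s t : Fin T =>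
          ((if s = t then (1 - ρ) * σ^2 else 0) + ρ * σ^2 + μ^2) - ∫ ξ, ξ s * ξ t ∂P) ∧
        r = P {ξ | γ ≤ ∏ t, ξ t}} =
      (if γ ≤ μ^T then 1
       else if γ < (μ + σ^2 * θ / ((T : ℝ) * μ))^T then
         ENNReal.ofReal (μ * (γ ^ ((1 : ℝ) / (T : ℝ)))⁻¹)
       else
         ENNReal.ofReal (σ^2 * θ / (σ^2 * θ + (T : ℝ) * (μ - γ ^ ((1 : ℝ) / (T : ℝ)))^2))) := by
  have hT2 : (2:ℝ) ≤ (T:ℝ) := by exact_mod_cast hT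
  have hT0 : (0:ℝ) < T := by linarith
  have hT0' : T ≠ 0 := by omega
  have hT1 : (0:ℝ) < (T:ℝ) - 1 := by linarith
  have hθ0 : 0 < θ := by
    have h := mul_lt_mul_of_pos_left hρ1 hT1
    have he : ((T:ℝ) - 1) * (-(1 / ((T:ℝ) - 1))) = -1 := by field_simp
    rw [he] at h
    rw [hθ]; linarith
  set α := γ ^ ((1 : ℝ) / (T : ℝ)) with hαdef
  have hα : 0 < α := Real.rpow_pos_of_pos hγ _
  have hαT : α ^ T = γ := by
    rw [hαdef, ← Real.rpow_natCast (γ ^ ((1:ℝ)/(T:ℝ))) T, ← Real.rpow_mul hγ.le,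
      one_div, inv_mul_cancel₀ (by positivity : (T:ℝ) ≠ 0), Real.rpow_one]
  set c := μ + σ^2 * θ / ((T:ℝ) * μ) with hcdef
  have hμc : μ < c := by
    have : 0 < σ^2 * θ / ((T:ℝ) * μ) := by positivity
    rw [hcdef]; linarith
  have hiff1 : γ ≤ μ^T ↔ α ≤ μ := by
    constructor
    · intro h
      by_contra hlt
      push_neg at hlt
      have := pow_lt_pow_left₀ hlt hμ.le hT0'
      rw [hαT] at this
      linarith
    · intro h
      calc γ = α ^ T := hαT.symm
        _ ≤ μ ^ T := pow_le_pow_left₀ hα.le h T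
  have hiff2 : γ < c^T ↔ α < c := by
    constructor
    · intro h
      by_contra hle
      push_neg at hle
      have := pow_le_pow_left₀ (by positivity : (0:ℝ) ≤ c) hle T
      rw [hαT] at this
      linarith
    · intro h
      calc γ = α ^ T := hαT.symm
        _ < c ^ T := pow_lt_pow_left₀ h hα.le hT0'
  have hy0 : ¬ γ ≤ (0:ℝ) ^ T := by
    rw [zero_pow hT0']
    linarith
  split_ifs with h1 h2
  · -- regime 1 : γ ≤ μ^T
    apply le_antisymm
    · apply sSup_le
      rintro r ⟨P, hP, -, -, -, -, -, rfl⟩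
      haveI := hP
      exact prob_le_one
    · have hm := feas_mem T hT μ σ ρ θ γ hρ2 hθ μ 0 1 hμ.le le_rfl zero_le_one le_rfl
        (by ring) (by nlinarith [show (0:ℝ) < σ^2*θ/(T:ℝ) from by positivity]) hσ h1 hy0
      simpa using le_sSup hm
  · -- regime 2
    have hμα : μ < α := by
      by_contra hle
      push_neg at hle
      exact h1 (hiff1.2 hle)
    have hαc : α < c := hiff2.1 h2
    apply le_antisymm
    · apply sSup_le
      rintro r ⟨P, hP, h0, hi1, hi2, hmn, hpsd, rfl⟩
      have hub := (feas_upper T hT μ σ ρ θ γ α hμ hσ hθ hθ0 hγ hα hαT P hP h0 hi1 hi2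
        hmn hpsd).1
      rwa [div_eq_mul_inv] at hub
    · have hμc' : μ * c = μ^2 + σ^2*θ/(T:ℝ) := by
        rw [hcdef]; field_simp
      have hq : (μ/α) * α ^ 2 + (1 - μ/α) * 0 ^ 2 ≤ μ ^ 2 + σ ^ 2 * θ / (T : ℝ) := by
        have he : (μ/α) * α ^ 2 + (1 - μ/α) * 0 ^ 2 = μ * α := by
          field_simp; ring
        rw [he, ← hμc']
        nlinarith
      have hm := feas_mem T hT μ σ ρ θ γ hρ2 hθ α 0 (μ/α) hα.le le_rfl (by positivity)
        ((div_le_one hα).2 hμα.le)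
        (by field_simp; ring) hq hσ (le_of_eq hαT.symm) hy0
      have := le_sSup hm
      rwa [div_eq_mul_inv] at this
  · -- regime 3
    have hcα : c ≤ α := by
      by_contra hlt
      push_neg at hlt
      exact h2 (hiff2.2 hlt)
    have hμα : μ < α := lt_of_lt_of_le hμc hcα
    have hαμ : (0:ℝ) < α - μ := by linarith
    set v := σ^2 * θ / (T:ℝ) with hvdef
    have hv0 : 0 < v := by positivity
    set p := v / (v + (α - μ)^2) with hpdef
    set y := μ - v / (α - μ) with hydef
    have hden : (0:ℝ) < v + (α - μ)^2 := by positivity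
    have hvμ : v ≤ μ * (α - μ) := by
      have h := mul_le_mul_of_nonneg_left (by linarith : c - μ ≤ α - μ) hμ.le
      have he : μ * (c - μ) = v := by
        rw [hcdef, hvdef]; field_simp; ring
      linarith
    have hy : 0 ≤ y := by
      rw [hydef, sub_nonneg, div_le_iff₀ hαμ]
      linarith
    have hyα : y < α := by
      have : 0 < v / (α - μ) := by positivity
      rw [hydef]; linarith
    have hyE : ¬ γ ≤ y ^ T := by
      have := pow_lt_pow_left₀ hyα hy hT0'
      rw [hαT] at this
      linarith
    apply le_antisymm
    · apply sSup_le
      rintro r ⟨P, hP, h0, hi1, hi2, hmn, hpsd, rfl⟩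
      have hub := (feas_upper T hT μ σ ρ θ γ α hμ hσ hθ hθ0 hγ hα hαT P hP h0 hi1 hi2
        hmn hpsd).2 hμα
      rwa [show (α - μ)^2 = (μ - α)^2 by ring] at hub
    · have hD : v + (α - μ)^2 ≠ 0 := ne_of_gt hden
      have h1p : 1 - p = (α - μ)^2 / (v + (α - μ)^2) := by
        rw [hpdef]; field_simp; ring
      have hyD : y * (α - μ) = μ * (α - μ) - v := by
        rw [hydef]; field_simp
      have hy1 : (α - μ)^2 * y = (α - μ) * (μ * (α - μ) - v) := by
        have hh : (α - μ)^2 * y = (α - μ) * (y * (α - μ)) := by ring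
        rw [hh, hyD]
      have hy2 : (α - μ)^2 * y^2 = (μ * (α - μ) - v)^2 := by
        have hh : (α - μ)^2 * y^2 = (y * (α - μ))^2 := by ring
        rw [hh, hyD]
      have hmean : p * α + (1 - p) * y = μ := by
        calc p * α + (1 - p) * y
            = (v * α + (α - μ)^2 * y) / (v + (α - μ)^2) := by
              rw [hpdef, h1p]; ring
          _ = μ := by
              rw [hy1, div_eq_iff hD]; ring
      have hq : p * α ^ 2 + (1 - p) * y ^ 2 ≤ μ ^ 2 + σ ^ 2 * θ / (T : ℝ) := by
        have he : p * α ^ 2 + (1 - p) * y ^ 2 = μ^2 + v := by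
          calc p * α ^ 2 + (1 - p) * y ^ 2
              = (v * α^2 + (α - μ)^2 * y^2) / (v + (α - μ)^2) := by
                rw [hpdef, h1p]; ring
            _ = μ^2 + v := by
                rw [hy2, div_eq_iff hD]; ring
        rw [he, hvdef]
      have hm := feas_mem T hT μ σ ρ θ γ hρ2 hθ α y p hα.le hy
        (by positivity) ((div_le_one hden).2 (le_add_of_nonneg_right (sq_nonneg _)))
        hmean hq hσ (le_of_eq hαT.symm) hyE
      have hval : p = σ^2 * θ / (σ^2 * θ + (T:ℝ) * (μ - α)^2) := by
        rw [hpdef, hvdef]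
        rw [show (μ - α)^2 = (α - μ)^2 by ring]
        rw [div_eq_div_iff (by positivity) (by positivity)]
        field_simp
      rw [← hval]
      exact le_sSup hm
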